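/- Let t be an SL₂-tiling with associated functions p and q. Then: (a) there are no integers a < b < c < d with p(a,c) = 1 and p(b,d) = 1, and likewise none with q(a,c) = 1 and q(b,d) = 1; (b) there are no integers a < b < c and v with p(a,c) = 1 and t(b,v) = 1, and no integers u < v < w and b with q(u,w) = 1 and t(b,v) = 1; (c) there are no integers b < c and v < w with t(b,v) = 1 and t(c,w) = 1. (This expresses that the set of arcs Θ(t) determined by the entries equal to 1 of t, p and q is pairwise non-crossing, i.e. a partial triangulation.) -/

import Mathlib

/-- An `SL₂`-tiling: all entries are `≥ 1` and every adjacent `2×2` minor is `1`. -/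
def IsSL2Tiling (t : ℤ → ℤ → ℤ) : Prop :=
  (∀ i j, 1 ≤ t i j) ∧
  (∀ i j, t i j * t (i+1) (j+1) - t i (j+1) * t (i+1) j = 1)

/-- The infinite frieze `p` associated to an `SL₂`-tiling. -/
def pFrieze (t : ℤ → ℤ → ℤ) (a d : ℤ) : ℤ := t a 0 * t d 1 - t a 1 * t d 0

/-- The infinite frieze `q` associated to an `SL₂`-tiling. -/
def qFrieze (t : ℤ → ℤ → ℤ) (u x : ℤ) : ℤ := t 0 u * t 1 x - t 0 x * t 1 u

namespace SL2Aux

lemma one_le_of_pos {a : ℤ} (h : 0 < a) : 1 ≤ a := h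

/-- Determinant transitivity for positive 2D integer vectors. -/
lemma det_trans {u1 u2 v1 v2 w1 w2 : ℤ} (hu : 0 < u1) (hv : 0 < v1) (hw : 0 < w1)
    (h1 : 0 < u1 * v2 - u2 * v1) (h2 : 0 < v1 * w2 - v2 * w1) :
    0 < u1 * w2 - u2 * w1 := by
  nlinarith [mul_pos h1 hw, mul_pos h2 hu]

variable {t : ℤ → ℤ → ℤ}

lemma entry_pos (ht : IsSL2Tiling t) (i j : ℤ) : 0 < t i j :=
  lt_of_lt_of_le zero_lt_one (ht.1 i j)

lemma posP (ht : IsSL2Tiling t) (v : ℤ) (a c : ℤ) (hac : a < c) :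
    0 < t a v * t c (v+1) - t a (v+1) * t c v := by
  have h : ∀ c : ℤ, a + 1 ≤ c → 0 < t a v * t c (v+1) - t a (v+1) * t c v := by
    refine Int.le_induction ?_ ?_
    · have := ht.2 a v; linarith
    · intro n hn ih
      have hd : 0 < t n v * t (n+1) (v+1) - t n (v+1) * t (n+1) v := by
        have := ht.2 n v; linarith
      have := det_trans (entry_pos ht a v) (entry_pos ht n v) (entry_pos ht (n+1) v) ih hd
      linarith
  exact h c (by omega)

lemma posQ (ht : IsSL2Tiling t) (i : ℤ) (u x : ℤ) (hux : u < x) :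
    0 < t i u * t (i+1) x - t i x * t (i+1) u := by
  have h : ∀ x : ℤ, u + 1 ≤ x → 0 < t i u * t (i+1) x - t i x * t (i+1) u := by
    refine Int.le_induction ?_ ?_
    · have := ht.2 i u; linarith
    · intro n hn ih
      have hd : 0 < t i n * t (i+1) (n+1) - t (i+1) n * t i (n+1) := by
        have := ht.2 i n; nlinarith [ht.2 i n]
      have ih' : 0 < t i u * t (i+1) n - t (i+1) u * t i n := by linarith
      have := det_trans (entry_pos ht i u) (entry_pos ht i n) (entry_pos ht i (n+1)) ih' hd
      linarith
  exact h x (by omega)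

lemma generalPos (ht : IsSL2Tiling t) (b c v w : ℤ) (hbc : b < c) (hvw : v < w) :
    0 < t b v * t c w - t b w * t c v := by
  have h : ∀ w : ℤ, v + 1 ≤ w → 0 < t b v * t c w - t b w * t c v := by
    refine Int.le_induction ?_ ?_
    · have := posP ht v b c hbc; linarith
    · intro n hn ih
      have hd := posP ht n b c hbc
      have h1 : 0 < t b v * t c n - t c v * t b n := by linarith [ih]
      have h2 : 0 < t b n * t c (n+1) - t c n * t b (n+1) := by nlinarith [hd]
      have := det_trans (entry_pos ht b v) (entry_pos ht b n) (entry_pos ht b (n+1)) h1 h2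
      nlinarith [this]
  exact h w (by omega)

/-- Step for the column linear recurrence. -/
lemma colStep (ht : IsSL2Tiling t) (v β i : ℤ) :
    t i v + t i (v+2) = β * t i (v+1) ↔
      t (i+1) v + t (i+1) (v+2) = β * t (i+1) (v+1) := by
  have ha := ht.2 i v
  have hb := ht.2 i (v+1)
  rw [show v+1+1 = v+2 by ring] at hb
  have hne : t i (v+1) ≠ 0 := (entry_pos ht i (v+1)).ne'
  have hne' : t (i+1) (v+1) ≠ 0 := (entry_pos ht (i+1) (v+1)).ne'
  have cross : (t i v + t i (v+2)) * t (i+1) (v+1)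
      = (t (i+1) v + t (i+1) (v+2)) * t i (v+1) := by
    linear_combination ha - hb
  constructor
  · intro h
    apply mul_right_cancel₀ hne
    linear_combination -cross + t (i+1) (v+1) * h
  · intro h
    apply mul_right_cancel₀ hne'
    linear_combination cross + t i (v+1) * h

/-- Three consecutive columns of an `SL₂`-tiling satisfy an integer linear recurrence. -/
lemma colRec (ht : IsSL2Tiling t) (v : ℤ) :
    ∃ β : ℤ, ∀ i : ℤ, t i v + t i (v+2) = β * t i (v+1) := by
  have ha := ht.2 0 v
  have hb := ht.2 0 (v+1)
  rw [show v+1+1 = v+2 by ring] at hb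
  rw [show (0:ℤ)+1 = 1 by norm_num] at ha hb
  have hcop : IsCoprime (t 0 (v+1)) (t 1 (v+1)) :=
    ⟨-(t 1 v), t 0 v, by linear_combination ha⟩
  have hmul : t 0 (v+1) ∣ (t 0 v + t 0 (v+2)) * t 1 (v+1) :=
    ⟨t 1 v + t 1 (v+2), by linear_combination ha - hb⟩
  obtain ⟨β, hβ⟩ := hcop.dvd_of_dvd_mul_right hmul
  refine ⟨β, ?_⟩
  intro i
  induction i using Int.induction_on with
  | zero => linear_combination hβ
  | succ n ih => exact (colStep ht v β n).mp ih
  | pred n ih =>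
      apply (colStep ht v β (-(n:ℤ) - 1)).mpr
      rw [show (-(n:ℤ) - 1) + 1 = -(n:ℤ) by ring]
      exact ih

/-- Step for the row linear recurrence. -/
lemma rowStep (ht : IsSL2Tiling t) (i γ j : ℤ) :
    t i j + t (i+2) j = γ * t (i+1) j ↔
      t i (j+1) + t (i+2) (j+1) = γ * t (i+1) (j+1) := by
  have ha := ht.2 i j
  have hb := ht.2 (i+1) j
  rw [show i+1+1 = i+2 by ring] at hb
  have hne : t (i+1) j ≠ 0 := (entry_pos ht (i+1) j).ne'
  have hne' : t (i+1) (j+1) ≠ 0 := (entry_pos ht (i+1) (j+1)).ne'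
  have cross : (t i j + t (i+2) j) * t (i+1) (j+1)
      = (t i (j+1) + t (i+2) (j+1)) * t (i+1) j := by
    linear_combination ha - hb
  constructor
  · intro h
    apply mul_right_cancel₀ hne
    linear_combination -cross + t (i+1) (j+1) * h
  · intro h
    apply mul_right_cancel₀ hne'
    linear_combination cross + t (i+1) j * h

/-- Three consecutive rows of an `SL₂`-tiling satisfy an integer linear recurrence. -/
lemma rowRec (ht : IsSL2Tiling t) (i : ℤ) :
    ∃ γ : ℤ, ∀ j : ℤ, t i j + t (i+2) j = γ * t (i+1) j := by
  have ha := ht.2 i 0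
  have hb := ht.2 (i+1) 0
  rw [show i+1+1 = i+2 by ring] at hb
  rw [show (0:ℤ)+1 = 1 by norm_num] at ha hb
  have hcop : IsCoprime (t (i+1) 0) (t (i+1) 1) :=
    ⟨-(t i 1), t i 0, by linear_combination ha⟩
  have hmul : t (i+1) 0 ∣ (t i 0 + t (i+2) 0) * t (i+1) 1 :=
    ⟨t i 1 + t (i+2) 1, by linear_combination ha - hb⟩
  obtain ⟨γ, hγ⟩ := hcop.dvd_of_dvd_mul_right hmul
  refine ⟨γ, ?_⟩
  intro j
  induction j using Int.induction_on with
  | zero => linear_combination hγ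
  | succ n ih => exact (rowStep ht i γ n).mp ih
  | pred n ih =>
      apply (rowStep ht i γ (-(n:ℤ) - 1)).mpr
      rw [show (-(n:ℤ) - 1) + 1 = -(n:ℤ) by ring]
      exact ih

lemma stepP (ht : IsSL2Tiling t) (v a c : ℤ) :
    t a (v+1) * t c (v+1+1) - t a (v+1+1) * t c (v+1)
      = t a v * t c (v+1) - t a (v+1) * t c v := by
  obtain ⟨β, hβ⟩ := colRec ht v
  rw [show v+1+1 = v+2 by ring]
  linear_combination t a (v+1) * hβ c - t c (v+1) * hβ a

lemma indP (ht : IsSL2Tiling t) (a c : ℤ) (v : ℤ) :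
    t a v * t c (v+1) - t a (v+1) * t c v = t a 0 * t c 1 - t a 1 * t c 0 := by
  induction v using Int.induction_on with
  | zero => norm_num
  | succ n ih => rw [stepP ht n a c]; exact ih
  | pred n ih =>
      have h := stepP ht (-(n:ℤ) - 1) a c
      rw [show (-(n:ℤ) - 1) + 1 = -(n:ℤ) by ring] at h ⊢
      linarith [h, ih]

lemma stepQ (ht : IsSL2Tiling t) (i u x : ℤ) :
    t (i+1) u * t (i+1+1) x - t (i+1) x * t (i+1+1) u
      = t i u * t (i+1) x - t i x * t (i+1) u := by
  obtain ⟨γ, hγ⟩ := rowRec ht i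
  rw [show i+1+1 = i+2 by ring]
  linear_combination t (i+1) u * hγ x - t (i+1) x * hγ u

lemma indQ (ht : IsSL2Tiling t) (u x : ℤ) (i : ℤ) :
    t i u * t (i+1) x - t i x * t (i+1) u = t 0 u * t 1 x - t 0 x * t 1 u := by
  induction i using Int.induction_on with
  | zero => norm_num
  | succ n ih => rw [stepQ ht n u x]; exact ih
  | pred n ih =>
      have h := stepQ ht (-(n:ℤ) - 1) u x
      rw [show (-(n:ℤ) - 1) + 1 = -(n:ℤ) by ring] at h ⊢
      linarith [h, ih]

end SL2Aux

open SL2Aux in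
theorem theta_non_crossing (t : ℤ → ℤ → ℤ) (ht : IsSL2Tiling t) :
    -- (a) two crossing internal arcs in interval I or in interval III
    (∀ a b c d : ℤ, a < b → b < c → c < d →
      ¬ (pFrieze t a c = 1 ∧ pFrieze t b d = 1)) ∧
    (∀ a b c d : ℤ, a < b → b < c → c < d →
      ¬ (qFrieze t a c = 1 ∧ qFrieze t b d = 1)) ∧
    -- (b) an internal arc crossing a connecting arc
    (∀ a b c v : ℤ, a < b → b < c →
      ¬ (pFrieze t a c = 1 ∧ t b v = 1)) ∧
    (∀ u v w b : ℤ, u < v → v < w →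
      ¬ (qFrieze t u w = 1 ∧ t b v = 1)) ∧
    -- (c) two crossing connecting arcs
    (∀ b c v w : ℤ, b < c → v < w →
      ¬ (t b v = 1 ∧ t c w = 1)) := by
  refine ⟨?_, ?_, ?_, ?_, ?_⟩
  · -- (a), p-case
    rintro a b c d hab hbc hcd ⟨hp1, hp2⟩
    unfold pFrieze at hp1 hp2
    have pab := posP ht 0 a b hab
    have pcd := posP ht 0 c d hcd
    have pad := posP ht 0 a d (by omega)
    have pbc := posP ht 0 b c hbc
    simp only [zero_add] at pab pcd pad pbc
    have key : (t a 0 * t c 1 - t a 1 * t c 0) * (t b 0 * t d 1 - t b 1 * t d 0)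
        = (t a 0 * t b 1 - t a 1 * t b 0) * (t c 0 * t d 1 - t c 1 * t d 0)
          + (t a 0 * t d 1 - t a 1 * t d 0) * (t b 0 * t c 1 - t b 1 * t c 0) := by ring
    rw [hp1, hp2] at key
    nlinarith [one_le_of_pos pab, one_le_of_pos pcd, one_le_of_pos pad, one_le_of_pos pbc]
  · -- (a), q-case
    rintro a b c d hab hbc hcd ⟨hq1, hq2⟩
    unfold qFrieze at hq1 hq2
    have qab := posQ ht 0 a b hab
    have qcd := posQ ht 0 c d hcd
    have qad := posQ ht 0 a d (by omega)
    have qbc := posQ ht 0 b c hbc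
    simp only [zero_add] at qab qcd qad qbc
    have key : (t 0 a * t 1 c - t 0 c * t 1 a) * (t 0 b * t 1 d - t 0 d * t 1 b)
        = (t 0 a * t 1 b - t 0 b * t 1 a) * (t 0 c * t 1 d - t 0 d * t 1 c)
          + (t 0 a * t 1 d - t 0 d * t 1 a) * (t 0 b * t 1 c - t 0 c * t 1 b) := by ring
    rw [hq1, hq2] at key
    nlinarith [one_le_of_pos qab, one_le_of_pos qcd, one_le_of_pos qad, one_le_of_pos qbc]
  · -- (b), p-case
    rintro a b c v hab hbc ⟨hp, htb⟩
    unfold pFrieze at hp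
    have hind := indP ht a c v
    rw [hp] at hind
    have X := posP ht v b c hbc
    have Y := posP ht v a b hab
    have h1a := ht.1 a v
    have h1c := ht.1 c v
    have key : (t a v * t c (v+1) - t a (v+1) * t c v) * t b v
        = (t b v * t c (v+1) - t b (v+1) * t c v) * t a v
          + (t a v * t b (v+1) - t a (v+1) * t b v) * t c v := by ring
    rw [hind, htb] at key
    nlinarith [one_le_of_pos X, one_le_of_pos Y]
  · -- (b), q-case
    rintro u v w b huv hvw ⟨hq, htb⟩
    unfold qFrieze at hq
    have hind := indQ ht u w b
    rw [hq] at hind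
    have X := posQ ht b v w hvw
    have Y := posQ ht b u v huv
    have h1u := ht.1 b u
    have h1w := ht.1 b w
    have key : (t b u * t (b+1) w - t b w * t (b+1) u) * t b v
        = (t b v * t (b+1) w - t b w * t (b+1) v) * t b u
          + (t b u * t (b+1) v - t b v * t (b+1) u) * t b w := by ring
    rw [hind, htb] at key
    nlinarith [one_le_of_pos X, one_le_of_pos Y]
  · -- (c)
    rintro b c v w hbc hvw ⟨e1, e2⟩
    have h := generalPos ht b c v w hbc hvw
    rw [e1, e2] at h
    have h1 := ht.1 b w
    have h2 := ht.1 c v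
    nlinarith [h, h1, h2]
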